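/- In the setting of Lipschitz percolation on ℤ^{n+1} with parameter p > 1 − (2n+2)^{−2}, the minimal Lipschitz surface L satisfies the exponential tail bound: there exists A < ∞ such that P(L(0) > k) ≤ A·ν^k for all k ≥ 0, where ν = (2n+2)(1−p) < 1. -/

import Mathlib

open MeasureTheory ProbabilityTheory

/-- `L` is a Lipschitz open surface for the configuration `η` of open sites. -/
def IsLipSurface {n : ℕ} (η : ((Fin n → ℤ) × ℤ) → Bool) (L : (Fin n → ℤ) → ℕ) : Prop :=
  (∀ x : Fin n → ℤ, η (x, (L x : ℤ)) = true) ∧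
  (∀ x y : Fin n → ℤ, (∑ i, (x i - y i).natAbs) = 1 → |(L x : ℤ) - (L y : ℤ)| ≤ 1)

namespace LipPerc

variable {n : ℕ}

abbrev Site (n : ℕ) := (Fin n → ℤ) × ℤ
abbrev Stp (n : ℕ) := Option (Fin n × Bool)
abbrev Word (n : ℕ) := List (Stp n)

/-- One step of a λ-path. -/
def move (s : Stp n) (z : Site n) : Site n :=
  match s with
  | none => (z.1, z.2 + 1)
  | some (i, b) => (fun j => z.1 j + if j = i then (if b then 1 else -1) else 0, z.2 - 1)

/-- Run a word of steps from a starting site. -/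
def run (z : Site n) (w : Word n) : Site n := w.foldl (fun z s => move s z) z

/-- The sites entered by up-steps along the path. -/
def ups (z : Site n) : Word n → List (Site n)
  | [] => []
  | s :: w => (if s = none then [(z.1, z.2 + 1)] else []) ++ ups (move s z) w

/-- A word is valid for configuration `η` if all up-steps enter closed sites. -/
def valid (η : Site n → Bool) (z : Site n) (w : Word n) : Prop :=
  ∀ q ∈ ups z w, η q = false

@[simp] lemma run_nil (z : Site n) : run z ([] : Word n) = z := rfl
@[simp] lemma run_cons (z : Site n) (s : Stp n) (w : Word n) :
    run z (s :: w) = run (move s z) w := rfl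
@[simp] lemma ups_nil (z : Site n) : ups z ([] : Word n) = [] := rfl
lemma ups_cons (z : Site n) (s : Stp n) (w : Word n) :
    ups z (s :: w) = (if s = none then [(z.1, z.2 + 1)] else []) ++ ups (move s z) w := rfl

lemma run_append (z : Site n) (w w' : Word n) :
    run z (w ++ w') = run (run z w) w' := by
  simp [run, List.foldl_append]

lemma ups_append (z : Site n) (w w' : Word n) :
    ups z (w ++ w') = ups z w ++ ups (run z w) w' := by
  induction w generalizing z with
  | nil => simp
  | cons s w ih => simp [ups_cons, ih, List.append_assoc]

lemma ups_length (z : Site n) (w : Word n) :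
    (ups z w).length = w.count none := by
  induction w generalizing z with
  | nil => simp
  | cons s w ih =>
    rcases s with _ | p <;> simp [ups_cons, ih, List.count_cons]

lemma run_height (z : Site n) (w : Word n) :
    (run z w).2 = z.2 + (w.count none : ℤ) - ((w.length : ℤ) - (w.count none : ℤ)) := by
  induction w generalizing z with
  | nil => simp
  | cons s w ih =>
    rcases s with _ | p
    · rw [run_cons, ih]
      simp [move, List.count_cons]
      push_cast
      ring
    · rw [run_cons, ih]
      simp [move, List.count_cons]
      push_cast
      ring

lemma run_translate (z : Site n) (a : Fin n → ℤ) (t : ℤ) (w : Word n) :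
    run (z.1 + a, z.2 + t) w = ((run z w).1 + a, (run z w).2 + t) := by
  induction w generalizing z with
  | nil => rfl
  | cons s w ih =>
    rw [run_cons, run_cons]
    have : move s (z.1 + a, z.2 + t) = ((move s z).1 + a, (move s z).2 + t) := by
      rcases s with _ | ⟨i, b⟩
      · simp [move]; ring
      · simp only [move, Prod.mk.injEq]
        refine ⟨funext fun j => ?_, by ring⟩
        simp [Pi.add_apply]
        ring
    rw [this]
    exact ih (move s z)

/-- column displacement of a word -/
def disp (w : Word n) : Fin n → ℤ := (run ((0 : Fin n → ℤ), (0 : ℤ)) w).1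

lemma run_col (x₀ : Fin n → ℤ) (w : Word n) :
    (run (x₀, (0:ℤ)) w).1 = disp w + x₀ := by
  have := run_translate ((0 : Fin n → ℤ), (0:ℤ)) x₀ 0 w
  simp at this
  rw [show (x₀ : Fin n → ℤ) = 0 + x₀ by simp, show (0:ℤ) = 0 + 0 by simp] at *
  simpa [disp] using congrArg Prod.fst this

lemma mem_ups_decomp (z : Site n) (w : Word n) (q : Site n) (hq : q ∈ ups z w) :
    ∃ w₁ w₂ : Word n, w = w₁ ++ none :: w₂ ∧ move none (run z w₁) = q := by
  induction w generalizing z with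
  | nil => simp at hq
  | cons s w ih =>
    rw [ups_cons] at hq
    rcases List.mem_append.1 hq with h | h
    · rcases s with _ | p
      · simp at h
        exact ⟨[], w, rfl, by simp [move, h]⟩
      · simp at h
    · obtain ⟨w₁, w₂, hw, hm⟩ := ih (move s z) h
      exact ⟨s :: w₁, w₂, by rw [hw]; rfl, by simpa using hm⟩

lemma shorten (z : Site n) (w : Word n) (h : ¬ (ups z w).Nodup) :
    ∃ w' : Word n, w'.length < w.length ∧ run z w' = run z w ∧
      ∀ q ∈ ups z w', q ∈ ups z w := by
  induction w generalizing z with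
  | nil => simp at h
  | cons s w ih =>
    by_cases ht : (ups (move s z) w).Nodup
    · rcases s with _ | p
      · rw [ups_cons] at h
        simp only [if_pos rfl] at h
        set q : Site n := (z.1, z.2 + 1) with hqdef
        have hmq : move none z = q := rfl
        have hq : q ∈ ups q w := by
          by_contra hq
          refine h (List.nodup_cons.2 ⟨?_, by rwa [hmq] at ht⟩)
          rwa [hmq] at ht ⊢
        obtain ⟨a, b, hab, hm⟩ := mem_ups_decomp _ _ _ hq
        have hmove : ∀ y : Site n, move none y = (y.1, y.2 + 1) := fun y => rfl
        have hza : run q a = z := by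
          have h2 := hm
          rw [hmove, hqdef, Prod.mk.injEq] at h2
          rw [Prod.ext_iff, hqdef]
          exact ⟨h2.1, by omega⟩
        have e2 : ups z (none :: b) = q :: ups q b := by
          rw [ups_cons, if_pos rfl, hmq, ← hqdef]; rfl
        have e1 : ups z (none :: w) = q :: (ups q a ++ q :: ups q b) := by
          rw [ups_cons, if_pos rfl, hmq, ← hqdef, hab, ups_append, hza, e2]
          rfl
        refine ⟨none :: b, ?_, ?_, ?_⟩
        · simp [hab]
        · rw [run_cons, run_cons, hmq, hab, run_append, hza, run_cons, hmq]
        · intro q' hq'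
          rw [e2] at hq'
          rw [e1]
          rcases List.mem_cons.1 hq' with h' | h' <;>
            simp [h', List.mem_append]
      · rw [ups_cons] at h
        simp only [reduceCtorEq, if_false, List.nil_append] at h
        exact absurd ht h
    · obtain ⟨w', hlen, hrun, hsub⟩ := ih (move s z) ht
      refine ⟨s :: w', by simpa using Nat.succ_lt_succ hlen, by simpa using hrun, ?_⟩
      intro q hq
      rw [ups_cons] at hq ⊢
      rcases List.mem_append.1 hq with h' | h'
      · exact List.mem_append.2 (Or.inl h')
      · exact List.mem_append.2 (Or.inr (hsub q h'))

lemma nodupRefineAux (z : Site n) : ∀ (m : ℕ) (w : Word n), w.length ≤ m →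
    ∃ w' : Word n, run z w' = run z w ∧ (ups z w').Nodup ∧
      ∀ q ∈ ups z w', q ∈ ups z w := by
  intro m
  induction m with
  | zero =>
    intro w hw
    by_cases hnd : (ups z w).Nodup
    · exact ⟨w, rfl, hnd, fun q hq => hq⟩
    · obtain ⟨w', hlen, _, _⟩ := shorten z w hnd
      omega
  | succ m ih =>
    intro w hw
    by_cases hnd : (ups z w).Nodup
    · exact ⟨w, rfl, hnd, fun q hq => hq⟩
    · obtain ⟨w', hlen, hrun, hsub⟩ := shorten z w hnd
      obtain ⟨w'', hrun'', hnd'', hsub''⟩ := ih w' (by omega)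
      exact ⟨w'', hrun''.trans hrun, hnd'', fun q hq => hsub q (hsub'' q hq)⟩

lemma nodupRefine (z : Site n) (w : Word n) :
    ∃ w' : Word n, run z w' = run z w ∧ (ups z w').Nodup ∧
      ∀ q ∈ ups z w', q ∈ ups z w :=
  nodupRefineAux z w.length w le_rfl

/-- A word of pure down-steps from column `x` to column `0`. -/
lemma toZero : ∀ (D : ℕ) (x : Fin n → ℤ), (∑ i, (x i).natAbs) = D →
    ∃ wz : Word n, ∀ h : ℤ,
      run (x, h) wz = (0, h - (D : ℤ)) ∧ ups (x, h) wz = [] := by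
  intro D
  induction D with
  | zero =>
    intro x hx
    have hx0 : x = 0 := by
      funext i
      have : (x i).natAbs = 0 := by
        have := Finset.sum_eq_zero_iff.1 hx i (Finset.mem_univ i)
        exact this
      simpa [Int.natAbs_eq_zero] using this
    exact ⟨[], fun h => by simp [hx0]⟩
  | succ D ih =>
    intro x hx
    have hex : ∃ i, x i ≠ 0 := by
      by_contra hc
      push_neg at hc
      simp [hc] at hx
    obtain ⟨i, hi⟩ := hex
    set b : Bool := decide (x i < 0) with hb
    set x' : Fin n → ℤ := fun j => x j + if j = i then (if b then 1 else -1) else 0 with hx'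
    have hxi' : (x' i).natAbs = (x i).natAbs - 1 ∧ 1 ≤ (x i).natAbs := by
      constructor
      · by_cases hneg : x i < 0
        · simp [hx', hb, hneg]; omega
        · simp [hx', hb, hneg]; omega
      · omega
    have hsum' : (∑ j, (x' j).natAbs) = D := by
      have h1 : (∑ j, (x j).natAbs) = (x i).natAbs + ∑ j ∈ Finset.univ.erase i, (x j).natAbs :=
        (Finset.add_sum_erase _ _ (Finset.mem_univ i)).symm
      have h2 : (∑ j, (x' j).natAbs) = (x' i).natAbs + ∑ j ∈ Finset.univ.erase i, (x' j).natAbs :=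
        (Finset.add_sum_erase _ _ (Finset.mem_univ i)).symm
      have h3 : ∑ j ∈ Finset.univ.erase i, (x' j).natAbs
          = ∑ j ∈ Finset.univ.erase i, (x j).natAbs := by
        refine Finset.sum_congr rfl fun j hj => ?_
        have hji : j ≠ i := Finset.ne_of_mem_erase hj
        simp [hx', hji]
      rw [h2, h3, hxi'.1]
      rw [h1] at hx
      omega
    obtain ⟨wz', hwz'⟩ := ih x' hsum'
    refine ⟨some (i, b) :: wz', fun h => ?_⟩
    have hmv : move (some (i, b)) (x, h) = (x', h - 1) := rfl
    constructor
    · rw [run_cons, hmv, (hwz' (h - 1)).1]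
      refine Prod.ext_iff.2 ⟨rfl, by push_cast; ring⟩
    · rw [ups_cons]
      simp only [reduceCtorEq, if_false, List.nil_append, hmv]
      exact (hwz' (h - 1)).2

/-- A single down-step between ℓ¹-neighbours. -/
lemma neighborStep (x y : Fin n → ℤ) (hxy : (∑ i, (x i - y i).natAbs) = 1) :
    ∃ s : Stp n, s ≠ none ∧ ∀ h : ℤ, move s (x, h) = (y, h - 1) := by
  have hex : ∃ i, (x i - y i).natAbs ≠ 0 := by
    by_contra hc
    push_neg at hc
    simp [hc] at hxy
  obtain ⟨i, hi⟩ := hex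
  have hrest : ∀ j, j ≠ i → x j = y j := by
    intro j hj
    have h1 : (∑ k, (x k - y k).natAbs)
        = (x i - y i).natAbs + ∑ k ∈ Finset.univ.erase i, (x k - y k).natAbs :=
      (Finset.add_sum_erase _ _ (Finset.mem_univ i)).symm
    have h2 : ∑ k ∈ Finset.univ.erase i, (x k - y k).natAbs = 0 := by omega
    have h3 := Finset.sum_eq_zero_iff.1 h2 j (Finset.mem_erase.2 ⟨hj, Finset.mem_univ j⟩)
    omega
  have hone : (x i - y i).natAbs = 1 := by
    have h1 : (∑ k, (x k - y k).natAbs)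
        = (x i - y i).natAbs + ∑ k ∈ Finset.univ.erase i, (x k - y k).natAbs :=
      (Finset.add_sum_erase _ _ (Finset.mem_univ i)).symm
    omega
  refine ⟨some (i, decide (x i < y i)), by simp, fun h => ?_⟩
  simp only [move, Prod.mk.injEq]
  refine ⟨funext fun j => ?_, trivial⟩
  by_cases hj : j = i
  · subst hj
    by_cases hlt : x j < y j <;> simp [hlt] <;> omega
  · simp [hj, hrest j hj]

/-- Main deterministic lemma: if `L` is the minimal Lipschitz open surface and `L 0 > k ≥ 1`,
then there is a valid λ-word from level 0 ending at column 0 at height `≥ k`. -/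
lemma main_det (η : Site n → Bool) (L : (Fin n → ℤ) → ℕ)
    (hs : IsLipSurface η L)
    (hmin : ∀ L', IsLipSurface η L' → ∀ x, L x ≤ L' x)
    (k : ℕ) (hk : 1 ≤ k) (hL : k < L 0) :
    ∃ (x₀ : Fin n → ℤ) (w : Word n), valid η (x₀, (0:ℤ)) w ∧
      (run (x₀, (0:ℤ)) w).1 = 0 ∧ (k : ℤ) ≤ (run (x₀, (0:ℤ)) w).2 := by
  by_contra hno
  push_neg at hno
  set Hset : (Fin n → ℤ) → ℤ → Prop :=
    fun x h => ∃ (x₀ : Fin n → ℤ) (w : Word n),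
      valid η (x₀, (0:ℤ)) w ∧ run (x₀, (0:ℤ)) w = (x, h) with hHdef
  have hzero : ∀ x, Hset x 0 := by
    intro x
    exact ⟨x, [], fun q hq => by simp at hq, by simp⟩
  have hbdd : ∀ x h, Hset x h → h ≤ (k : ℤ) - 1 + (∑ i, (x i).natAbs : ℕ) := by
    intro x h hh
    obtain ⟨x₀, w, hv, hr⟩ := hh
    obtain ⟨wz, hwz⟩ := toZero (∑ i, (x i).natAbs) x rfl
    have hv' : valid η (x₀, (0:ℤ)) (w ++ wz) := by
      intro q hq
      rw [ups_append, hr] at hq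
      rcases List.mem_append.1 hq with h' | h'
      · exact hv q h'
      · rw [(hwz h).2] at h'
        simp at h'
    have hr' : run (x₀, (0:ℤ)) (w ++ wz) = (0, h - (∑ i, (x i).natAbs : ℕ)) := by
      rw [run_append, hr]
      exact (hwz h).1
    have := hno x₀ (w ++ wz) hv' (by rw [hr'])
    rw [hr'] at this
    simp only at this
    omega
  have hmax : ∀ x : Fin n → ℤ, ∃ M : ℤ, Hset x M ∧ ∀ h, Hset x h → h ≤ M := by
    intro x
    exact Int.exists_greatest_of_bdd
      ⟨(k : ℤ) - 1 + (∑ i, (x i).natAbs : ℕ), fun h hh => hbdd x h hh⟩ ⟨0, hzero x⟩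
  choose M hM1 hM2 using hmax
  have hM0 : ∀ x, 0 ≤ M x := fun x => hM2 x 0 (hzero x)
  have hnb : ∀ x y : Fin n → ℤ, (∑ i, (x i - y i).natAbs) = 1 → M x - 1 ≤ M y := by
    intro x y hxy
    obtain ⟨x₀, w, hv, hr⟩ := hM1 x
    obtain ⟨s, hs0, hsmv⟩ := neighborStep x y hxy
    have hup : ups (x, M x) ([s]) = [] := by
      rw [ups_cons, if_neg hs0]
      rfl
    refine hM2 y (M x - 1) ⟨x₀, w ++ [s], ?_, ?_⟩
    · intro q hq
      rw [ups_append, hr, hup] at hq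
      simp only [List.append_nil] at hq
      exact hv q hq
    · rw [run_append, hr]
      have : run (x, M x) ([s]) = move s (x, M x) := rfl
      rw [this, hsmv]
  have hopen : ∀ x, η (x, M x + 1) = true := by
    intro x
    by_contra hη
    have hη' : η (x, M x + 1) = false := by
      cases hc : η (x, M x + 1)
      · rfl
      · exact absurd hc hη
    obtain ⟨x₀, w, hv, hr⟩ := hM1 x
    have hmem : Hset x (M x + 1) := by
      refine ⟨x₀, w ++ [none], ?_, ?_⟩
      · intro q hq
        rw [ups_append, hr] at hq
        rcases List.mem_append.1 hq with h' | h'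
        · exact hv q h'
        · rw [ups_cons, if_pos rfl] at h'
          simp at h'
          rw [h']
          exact hη'
      · rw [run_append, hr]
        rfl
    have := hM2 x (M x + 1) hmem
    omega
  set Λ : (Fin n → ℤ) → ℕ := fun x => (M x + 1).toNat with hΛdef
  have hcoe : ∀ x, (Λ x : ℤ) = M x + 1 := by
    intro x
    simp only [hΛdef]
    exact Int.toNat_of_nonneg (by have := hM0 x; omega)
  have hΛsurf : IsLipSurface η Λ := by
    constructor
    · intro x
      rw [hcoe]
      exact hopen x
    · intro x y hxy
      rw [hcoe, hcoe]
      have hxy' : (∑ i, (y i - x i).natAbs) = 1 := by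
        rw [← hxy]
        exact Finset.sum_congr rfl fun i _ => by omega
      have h1 := hnb x y hxy
      have h2 := hnb y x hxy'
      rw [abs_le]
      omega
  have hle := hmin Λ hΛsurf 0
  have hM00 : M 0 ≤ (k : ℤ) - 1 := by
    have := hbdd 0 (M 0) (hM1 0)
    simpa using this
  have hΛ0 : Λ 0 ≤ k := by
    simp only [hΛdef]
    omega
  omega

open scoped ENNReal

lemma tsum_tuple (g : Stp n → ℝ≥0∞) (r : ℕ) :
    ∑' v : Fin r → Stp n, ∏ i, g (v i) = (∑ s : Stp n, g s) ^ r := by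
  induction r with
  | zero =>
    rw [tsum_fintype]
    simp
  | succ r ih =>
    rw [tsum_fintype] at ih ⊢
    have step : ∀ v : Fin (r+1) → Stp n, ∏ i, g (v i) = g (v 0) * ∏ i : Fin r, g (v i.succ) :=
      fun v => Fin.prod_univ_succ _
    calc (∑ v : Fin (r+1) → Stp n, ∏ i, g (v i))
        = ∑ p : Stp n × (Fin r → Stp n), (g p.1 * ∏ i, g (p.2 i)) := by
          refine (Fintype.sum_equiv (Fin.consEquiv (fun _ : Fin (r+1) => Stp n)) _ _ ?_).symm
          intro p
          rw [step]
          simp [Fin.consEquiv]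
      _ = (∑ s : Stp n, g s) * ∑ v : Fin r → Stp n, ∏ i, g (v i) := by
          rw [Fintype.sum_prod_type]
          rw [Finset.sum_mul]
          exact Finset.sum_congr rfl fun s _ => by rw [Finset.mul_sum]
      _ = (∑ s : Stp n, g s) ^ (r + 1) := by rw [ih, pow_succ]; ring

lemma tsum_words (g : Stp n → ℝ≥0∞) :
    ∑' w : Word n, ((w.map g).prod) = ∑' r : ℕ, (∑ s : Stp n, g s) ^ r := by
  have he := Equiv.tsum_eq (List.equivSigmaTuple (α := Stp n)).symm
    (fun w : Word n => (w.map g).prod)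
  rw [← he, ENNReal.tsum_sigma']
  congr 1
  funext r
  rw [← tsum_tuple g r]
  congr 1
  funext v
  simp [List.equivSigmaTuple, List.map_ofFn, List.prod_ofFn, Function.comp]

lemma map_prod_eq (a b : ℝ≥0∞) (w : Word n) :
    ((w.map (fun s : Stp n => if s = none then a else b)).prod)
      = a ^ (w.count none) * b ^ (w.length - w.count none) := by
  induction w with
  | nil => simp
  | cons s w ih =>
    have hc : w.count none ≤ w.length := List.count_le_length
    rcases s with _ | p
    · rw [List.map_cons, List.prod_cons, ih]
      have h1 : (none :: w : Word n).count none = w.count none + 1 := by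
        simp [List.count_cons]
      rw [h1]
      simp only [if_pos rfl, List.length_cons]
      have h2 : w.length + 1 - (w.count none + 1) = w.length - w.count none := by omega
      rw [h2, pow_succ]
      simp only [if_true]
      ring
    · rw [List.map_cons, List.prod_cons, ih]
      have h1 : ((some p : Stp n) :: w).count none = w.count none := by
        simp [List.count_cons]
      rw [h1]
      have h0 : ((some p : Stp n) = none) = False := by simp
      simp only [h0, if_false, List.length_cons]
      have h2 : w.length + 1 - w.count none = (w.length - w.count none) + 1 := by omega
      rw [h2, pow_succ]
      ring


end LipPerc

open scoped ENNReal in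
open LipPerc in
theorem stmt_10 {Ω : Type*} [MeasurableSpace Ω] (P : Measure Ω) [IsProbabilityMeasure P]
    (n : ℕ) (hn : 1 ≤ n) (p : ℝ) (hp : p ∈ Set.Ioo (0 : ℝ) 1)
    (hpc : 1 - ((2 * n + 2 : ℝ)) ^ (-2 : ℤ) < p)
    (X : ((Fin n → ℤ) × ℤ) → Ω → Bool) (hXmeas : ∀ z, Measurable (X z))
    (hindep : iIndepFun X P)
    (hdist : ∀ z, P {ω | X z ω = true} = ENNReal.ofReal p)
    -- `L` is the pointwise minimal Lipschitz open surface
    (L : Ω → (Fin n → ℤ) → ℕ)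
    (hLmeas : ∀ x, Measurable (fun ω => L ω x))
    (hLsurf : ∀ᵐ ω ∂P, IsLipSurface (fun z => X z ω) (L ω))
    (hLmin : ∀ᵐ ω ∂P, ∀ L' : (Fin n → ℤ) → ℕ,
      IsLipSurface (fun z => X z ω) L' → ∀ x, L ω x ≤ L' x) :
    (2 * n + 2 : ℝ) * (1 - p) < 1 ∧
    ∃ A : ℝ, ∀ k : ℕ,
      (P {ω | k < L ω 0}).toReal ≤ A * ((2 * n + 2 : ℝ) * (1 - p)) ^ k := by
  obtain ⟨hp0, hp1⟩ := hp
  have hn1 : (1:ℝ) ≤ (n:ℝ) := by exact_mod_cast hn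
  set N : ℝ := 2 * (n:ℝ) + 2 with hNdef
  have hN4 : 4 ≤ N := by rw [hNdef]; linarith
  have hNpos : 0 < N := by linarith
  have hq0 : 0 < 1 - p := by linarith
  have hzpow : N ^ (-2 : ℤ) = (N * N)⁻¹ := by
    rw [zpow_neg, zpow_two]
  have hq2 : (1 - p) * (N * N) < 1 := by
    have h1 : 1 - p < (N * N)⁻¹ := by rw [← hzpow]; linarith [hpc]
    rw [inv_eq_one_div] at h1
    rw [← lt_div_iff₀ (by positivity)]
    exact h1
  have hν1 : N * (1 - p) < 1 := by nlinarith [hq0, hN4, hq2]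
  refine ⟨hν1, ?_⟩
  -- real-number quantities
  have hNinv : N * N⁻¹ = 1 := mul_inv_cancel₀ (ne_of_gt hNpos)
  have hinvpos : 0 < N⁻¹ := inv_pos.2 hNpos
  have hqeq : 1 - p = N⁻¹ * (N * (1 - p)) := by
    rw [← mul_assoc, inv_mul_cancel₀ (ne_of_gt hNpos), one_mul]
  have hν_lt_inv : N * (1 - p) < N⁻¹ := by nlinarith [hq2, hinvpos, hNinv]
  have hSR : N⁻¹ + (2 * (n:ℝ)) * (N * (1 - p)) < 1 := by
    nlinarith [hν_lt_inv, hinvpos, hNinv, hn1, hq0, hNpos]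
  have hν0 : 0 ≤ N * (1 - p) := by positivity
  -- ENNReal quantities
  set aE : ℝ≥0∞ := ENNReal.ofReal N⁻¹ with haE
  set bE : ℝ≥0∞ := ENNReal.ofReal (N * (1 - p)) with hbE
  set qE : ℝ≥0∞ := ENNReal.ofReal (1 - p) with hqEdef
  have hqE : qE = aE * bE := by
    rw [haE, hbE, hqEdef, ← ENNReal.ofReal_mul hinvpos.le, ← hqeq]
  have hbE1 : bE ≤ 1 := by rw [hbE]; exact ENNReal.ofReal_le_one.2 hν1.le
  set SE : ℝ≥0∞ := ∑ s : Stp n, (if s = none then aE else bE) with hSEdef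
  have hSEval : SE = aE + ENNReal.ofReal ((2 * (n:ℝ)) * (N * (1 - p))) := by
    rw [hSEdef, Fintype.sum_option]
    simp only [if_pos rfl, reduceCtorEq, if_false]
    rw [Finset.sum_const, Finset.card_univ]
    have hcard : Fintype.card (Fin n × Bool) = 2 * n := by
      simp [Fintype.card_prod, Fintype.card_fin, Fintype.card_bool]; ring
    rw [hcard, nsmul_eq_mul, hbE]
    congr 1
    rw [← ENNReal.ofReal_natCast (2 * n), ← ENNReal.ofReal_mul (by positivity)]
    congr 1
    push_cast
    ring
  have hSE1 : SE < 1 := by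
    rw [hSEval, haE, ← ENNReal.ofReal_add hinvpos.le (by positivity)]
    exact ENNReal.ofReal_lt_one.2 hSR
  have hT : (∑' w : Word n, ((w.map (fun s : Stp n => if s = none then aE else bE)).prod))
      = (1 - SE)⁻¹ := by
    rw [tsum_words, ← hSEdef, ENNReal.tsum_geometric]
  have hfin : (1 - SE)⁻¹ ≠ ⊤ := ENNReal.inv_ne_top.2 (tsub_pos_of_lt hSE1).ne'
  set C : ℝ := ((1 - SE)⁻¹).toReal with hCdef
  refine ⟨max 1 C, fun k => ?_⟩
  have hA1 : (1:ℝ) ≤ max 1 C := le_max_left 1 C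
  have hAC : C ≤ max 1 C := le_max_right 1 C
  rcases Nat.eq_zero_or_pos k with hk0 | hk1
  · subst hk0
    rw [pow_zero, mul_one]
    calc (P {ω | 0 < L ω 0}).toReal ≤ (1 : ℝ≥0∞).toReal :=
          ENNReal.toReal_mono ENNReal.one_ne_top prob_le_one
      _ = 1 := ENNReal.toReal_one
      _ ≤ max 1 C := hA1
  · -- main case k ≥ 1
    set startW : Word n → Site n := fun w => (-(disp w), (0:ℤ)) with hstartW
    set WK : Set (Word n) := {w | (ups (startW w) w).Nodup ∧
        (run (startW w) w).1 = 0 ∧ (k:ℤ) ≤ (run (startW w) w).2} with hWK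
    set E : Word n → Set Ω := fun w => {ω | ∀ q ∈ ups (startW w) w, X q ω = false} with hE
    set Q : Ω → Prop := fun ω => IsLipSurface (fun z => X z ω) (L ω) ∧
      ∀ L', IsLipSurface (fun z => X z ω) L' → ∀ x, L ω x ≤ L' x with hQdef
    have hQae : ∀ᵐ ω ∂P, Q ω := hLsurf.and hLmin
    have hQnull : P {ω | ¬ Q ω} = 0 := ae_iff.1 hQae
    have hsub : {ω | k < L ω 0} ⊆ (⋃ w ∈ WK, E w) ∪ {ω | ¬ Q ω} := by
      intro ω hω
      by_cases hQ : Q ω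
      · left
        obtain ⟨x₀, w, hv, hcol, hht⟩ := main_det (fun z => X z ω) (L ω) hQ.1 hQ.2 k hk1 hω
        obtain ⟨w', hrun', hnd', hsubw⟩ := nodupRefine (x₀, (0:ℤ)) w
        have hcol' : (run (x₀, (0:ℤ)) w').1 = 0 := by rw [hrun']; exact hcol
        have hht' : (k:ℤ) ≤ (run (x₀, (0:ℤ)) w').2 := by rw [hrun']; exact hht
        have hx₀ : startW w' = (x₀, (0:ℤ)) := by
          rw [run_col] at hcol'
          have hx : x₀ = -(disp w') := eq_neg_of_add_eq_zero_right hcol'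
          show (-(disp w'), (0:ℤ)) = (x₀, (0:ℤ))
          rw [hx]
        refine Set.mem_biUnion (show w' ∈ WK from ?_) (show ω ∈ E w' from ?_)
        · refine ⟨by rw [hx₀]; exact hnd', by rw [hx₀]; exact hcol', by rw [hx₀]; exact hht'⟩
        · intro q hq
          rw [hx₀] at hq
          exact hv q (hsubw q hq)
      · right; exact hQ
    have hm1 : P {ω | k < L ω 0} ≤ P (⋃ w ∈ WK, E w) := by
      calc P {ω | k < L ω 0} ≤ P ((⋃ w ∈ WK, E w) ∪ {ω | ¬ Q ω}) := measure_mono hsub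
        _ ≤ P (⋃ w ∈ WK, E w) + P {ω | ¬ Q ω} := measure_union_le _ _
        _ = P (⋃ w ∈ WK, E w) := by rw [hQnull, add_zero]
    have hm2 : P (⋃ w ∈ WK, E w) ≤ ∑' w : WK, P (E w) :=
      measure_biUnion_le P (Set.to_countable WK) E
    have hEw : ∀ w ∈ WK, P (E w)
        ≤ bE ^ k * ((w.map (fun s : Stp n => if s = none then aE else bE)).prod) := by
      intro w hw
      obtain ⟨hnd, hcolw, hhtw⟩ := hw
      have hEeq : E w = ⋂ z ∈ (ups (startW w) w).toFinset, (X z) ⁻¹' {false} := by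
        ext ω
        simp [hE, List.mem_toFinset]
      have hXz : ∀ z, P ((X z) ⁻¹' {false}) = qE := by
        intro z
        have hc : (X z) ⁻¹' {false} = ((X z) ⁻¹' {true})ᶜ := by
          ext ω
          simp
        rw [hc, prob_compl_eq_one_sub (hXmeas z (measurableSet_singleton true))]
        have h2 : (X z) ⁻¹' {true} = {ω | X z ω = true} := by ext ω; simp
        rw [h2, hdist z, hqEdef, ENNReal.ofReal_sub 1 hp0.le, ENNReal.ofReal_one]
      have hmeasEq : P (E w) = qE ^ (w.count none) := by
        rw [hEeq, hindep.meas_biInter (fun z _ => ⟨{false}, measurableSet_singleton false, rfl⟩)]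
        rw [Finset.prod_congr rfl (fun z _ => hXz z), Finset.prod_const]
        rw [List.toFinset_card_of_nodup hnd, ups_length]
      have hud : k + (w.length - w.count none) ≤ w.count none := by
        have hh := run_height (startW w) w
        have h0 : (startW w).2 = 0 := rfl
        rw [h0] at hh
        rw [hh] at hhtw
        have hcle : w.count (none : Stp n) ≤ w.length := List.count_le_length
        omega
      rw [hmeasEq, map_prod_eq]
      calc qE ^ (w.count none) = aE ^ (w.count none) * bE ^ (w.count none) := by
            rw [hqE, mul_pow]
        _ ≤ aE ^ (w.count none) * (bE ^ k * bE ^ (w.length - w.count none)) := by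
            have hb : bE ^ (w.count none) ≤ bE ^ (k + (w.length - w.count none)) :=
              pow_le_pow_right_of_le_one' hbE1 hud
            rw [pow_add] at hb
            exact mul_le_mul_right hb _
        _ = bE ^ k * (aE ^ (w.count none) * bE ^ (w.length - w.count none)) := by ring
    have hs1 : ∑' w : WK, P (E w) ≤ bE ^ k * (1 - SE)⁻¹ := by
      calc ∑' w : WK, P (E w)
          ≤ ∑' w : WK, bE ^ k *
            ((w.1.map (fun s : Stp n => if s = none then aE else bE)).prod) :=
            ENNReal.tsum_le_tsum (fun w => hEw w.1 w.2)
        _ = bE ^ k * ∑' w : WK,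
            ((w.1.map (fun s : Stp n => if s = none then aE else bE)).prod) :=
            ENNReal.tsum_mul_left
        _ ≤ bE ^ k * ∑' w : Word n,
            ((w.map (fun s : Stp n => if s = none then aE else bE)).prod) := by
            exact mul_le_mul_right
              (ENNReal.tsum_comp_le_tsum_of_injective Subtype.val_injective
                (fun w : Word n =>
                  ((w.map (fun s : Stp n => if s = none then aE else bE)).prod))) _
        _ = bE ^ k * (1 - SE)⁻¹ := by rw [hT]
    have hchain : P {ω | k < L ω 0} ≤ bE ^ k * (1 - SE)⁻¹ :=
      le_trans hm1 (le_trans hm2 hs1)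
    have hfin2 : bE ^ k * (1 - SE)⁻¹ ≠ ⊤ :=
      ENNReal.mul_ne_top (ENNReal.pow_ne_top ENNReal.ofReal_ne_top) hfin
    have htr := ENNReal.toReal_mono hfin2 hchain
    rw [ENNReal.toReal_mul, ENNReal.toReal_pow, hbE, ENNReal.toReal_ofReal hν0] at htr
    calc (P {ω | k < L ω 0}).toReal ≤ (N * (1 - p)) ^ k * C := htr
      _ ≤ (N * (1 - p)) ^ k * max 1 C :=
          mul_le_mul_of_nonneg_left hAC (pow_nonneg hν0 k)
      _ = max 1 C * (N * (1 - p)) ^ k := mul_comm _ _
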